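/- Let G₁, G₂ be finite simple graphs with |V(G₁)| = |V(G₂)| = n, let A be a unital C*-algebra, and let U = (u_{a,x})_{a ∈ V(G₂), x ∈ V(G₁)} be a bi-unitary matrix over A satisfying u_{a,x} u_{b,y}^* = 0 whenever (a ~ b in G₂ and x ≁ y in G₁) or (a ≁ b in G₂ and x ~ y in G₁), where no vertex is adjacent to itself. If x ∈ V(G₁) has degree j, a ∈ V(G₂) has degree k, and j ≠ k, then u_{a,x} = 0. -/
import Mathlib


/-- entries of a bi-unitary intertwiner between two graphs vanish
when the corresponding vertices have different degrees. -/
theorem stmt7 {A : Type*} [NormedRing A] [StarRing A] [CStarRing A]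
    [CompleteSpace A] [NormedAlgebra ℂ A] [StarModule ℂ A]
    (n : ℕ) (G₁ G₂ : SimpleGraph (Fin n))
    [DecidableRel G₁.Adj] [DecidableRel G₂.Adj]
    (u : Fin n → Fin n → A)
    -- u a x : a a vertex of G₂, x a vertex of G₁; bi-unitarity:
    (hUU : ∀ a b : Fin n, ∑ x, u a x * star (u b x) = if a = b then 1 else 0)
    (hUU' : ∀ x y : Fin n, ∑ a, star (u a x) * u a y = if x = y then 1 else 0)
    (hUt : ∀ x y : Fin n, ∑ a, u a x * star (u a y) = if x = y then 1 else 0)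
    (hUt' : ∀ a b : Fin n, ∑ x, star (u a x) * u b x = if a = b then 1 else 0)
    -- orthogonality conditions
    (horth : ∀ a b x y : Fin n,
      ((G₂.Adj a b ∧ ¬ G₁.Adj x y) ∨ (¬ G₂.Adj a b ∧ G₁.Adj x y)) →
      u a x * star (u b y) = 0)
    (x a : Fin n) (j k : ℕ) (hx : G₁.degree x = j) (ha : G₂.degree a = k)
    (hjk : j ≠ k) :
    u a x = 0 := by
  set s := G₁.neighborFinset x with hs
  set t := G₂.neighborFinset a with ht
  -- full sum over b equals j • u a x
  have h1 : ∑ y ∈ s, ∑ b : Fin n, u a x * star (u b y) * u b y = j • u a x := by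
    have : ∀ y ∈ s, ∑ b : Fin n, u a x * star (u b y) * u b y = u a x := by
      intro y _
      have : ∑ b : Fin n, u a x * star (u b y) * u b y
          = u a x * ∑ b : Fin n, star (u b y) * u b y := by
        rw [Finset.mul_sum]; exact Finset.sum_congr rfl fun b _ => mul_assoc _ _ _
      rw [this, hUU' y y, if_pos rfl, mul_one]
    rw [Finset.sum_congr rfl this, Finset.sum_const, ← hx]
    rw [hs]; rfl
  -- restrict b to neighbors of a
  have h2 : ∑ y ∈ s, ∑ b : Fin n, u a x * star (u b y) * u b y
      = ∑ y ∈ s, ∑ b ∈ t, u a x * star (u b y) * u b y := by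
    refine Finset.sum_congr rfl fun y hy => ?_
    have hxy : G₁.Adj x y := by rw [hs, SimpleGraph.mem_neighborFinset] at hy; exact hy
    refine (Finset.sum_subset (Finset.subset_univ t) fun b _ hb => ?_).symm
    have hab : ¬ G₂.Adj a b := by
      rw [ht, SimpleGraph.mem_neighborFinset] at hb; exact hb
    rw [horth a b x y (Or.inr ⟨hab, hxy⟩), zero_mul]
  -- full sum over y equals k • u a x
  have h3 : ∑ b ∈ t, ∑ y : Fin n, u a x * star (u b y) * u b y = k • u a x := by
    have : ∀ b ∈ t, ∑ y : Fin n, u a x * star (u b y) * u b y = u a x := by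
      intro b _
      have : ∑ y : Fin n, u a x * star (u b y) * u b y
          = u a x * ∑ y : Fin n, star (u b y) * u b y := by
        rw [Finset.mul_sum]; exact Finset.sum_congr rfl fun y _ => mul_assoc _ _ _
      rw [this, hUt' b b, if_pos rfl, mul_one]
    rw [Finset.sum_congr rfl this, Finset.sum_const, ← ha]
    rw [ht]; rfl
  -- restrict y to neighbors of x
  have h4 : ∑ b ∈ t, ∑ y : Fin n, u a x * star (u b y) * u b y
      = ∑ b ∈ t, ∑ y ∈ s, u a x * star (u b y) * u b y := by
    refine Finset.sum_congr rfl fun b hb => ?_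
    have hab : G₂.Adj a b := by rw [ht, SimpleGraph.mem_neighborFinset] at hb; exact hb
    refine (Finset.sum_subset (Finset.subset_univ s) fun y _ hy => ?_).symm
    have hxy : ¬ G₁.Adj x y := by
      rw [hs, SimpleGraph.mem_neighborFinset] at hy; exact hy
    rw [horth a b x y (Or.inl ⟨hab, hxy⟩), zero_mul]
  have key : (j : ℕ) • u a x = (k : ℕ) • u a x := by
    rw [← h1, h2, Finset.sum_comm, ← h4, h3]
  have key' : ((j : ℂ) - (k : ℂ)) • u a x = 0 := by
    rw [sub_smul, Nat.cast_smul_eq_nsmul, Nat.cast_smul_eq_nsmul, key, sub_self]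
  rcases smul_eq_zero.mp key' with h | h
  · exact absurd (by exact_mod_cast sub_eq_zero.mp h) hjk
  · exact h
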